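/- The normalized partial metric lower-bounds the full normalized metric: let R be any complex T×T matrix and let s ∈ ℂ^T be nonzero with |s_k|² ≤ 18 for all k. Then for every index i with 1 ≤ i ≤ T, (Σ_{l=i}^T |(R s)_l|²)/(18·(i − 1) + Σ_{k=i}^T |s_k|²) ≤ ‖R s‖²/‖s‖². -/
import Mathlib


open Matrix Finset

/-- **The normalized partial metric lower-bounds the full normalized metric**
(correctness of pruning, Theorem 3 of the paper). For any `T × T` complex matrix `R`
and nonzero `s ∈ ℂ^T` with `|s_k|² ≤ 18` for all `k`, and every index `i` (`0`-based,
so the paper's `18(i−1)` becomes `18·(i : ℕ)`),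
`(∑_{l ≥ i} |(R s)_l|²)/(18·(i−1) + ∑_{k ≥ i} |s_k|²) ≤ ‖R s‖²/‖s‖²`. -/
theorem normalized_partial_metric_le_full (T : ℕ) (R : Matrix (Fin T) (Fin T) ℂ)
    (s : Fin T → ℂ) (hs : s ≠ 0) (hbound : ∀ k, Complex.normSq (s k) ≤ 18) :
    ∀ i : Fin T,
      (∑ l ∈ Finset.Ici i, Complex.normSq ((R *ᵥ s) l)) /
        (18 * (i : ℕ) + ∑ k ∈ Finset.Ici i, Complex.normSq (s k)) ≤
      (∑ l : Fin T, Complex.normSq ((R *ᵥ s) l)) / (∑ k : Fin T, Complex.normSq (s k)) := by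
  intro i
  have hd : 0 < ∑ k : Fin T, Complex.normSq (s k) := by
    obtain ⟨k, hk⟩ := Function.ne_iff.1 hs
    exact Finset.sum_pos' (fun j _ => Complex.normSq_nonneg _)
      ⟨k, Finset.mem_univ k, Complex.normSq_pos.2 hk⟩
  apply div_le_div₀ (Finset.sum_nonneg fun j _ => Complex.normSq_nonneg _)
    (Finset.sum_le_sum_of_subset_of_nonneg (Finset.subset_univ _)
      (fun j _ _ => Complex.normSq_nonneg _)) hd
  have hsplit : (∑ k : Fin T, Complex.normSq (s k)) =
      (∑ k ∈ Finset.Iio i, Complex.normSq (s k)) +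
      (∑ k ∈ Finset.Ici i, Complex.normSq (s k)) := by
    rw [← Finset.sum_union (by simp [Finset.disjoint_left])]
    congr 1
    ext j
    simp [lt_or_ge]
  rw [hsplit]
  gcongr
  calc (∑ k ∈ Finset.Iio i, Complex.normSq (s k)) ≤ ∑ k ∈ Finset.Iio i, 18 :=
        Finset.sum_le_sum fun j _ => hbound j
    _ = 18 * (i : ℕ) := by simp [Fin.card_Iio, mul_comm]
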